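/- Let G be an AH-algebra and let g ∈ G. Then the projection p := (g⁺)° satisfies p ∈ P ∩ CC(g) and (1−p)g ≤ 0 ≤ pg. In particular, G has the comparability property: for every g ∈ G there exists a projection p ∈ P ∩ C(g) ∩ C(P ∩ C(g)) with (1−p)g ≤ 0 ≤ pg. -/

import Mathlib

/-- An e-ring `(R,E)`: an associative ring `R` with unity together with a set `E ⊆ R`
of effects, satisfying the Foulis axioms.  `E⁺` is realized as the additive submonoid
closure of `E` (the set of all finite sums of effects). -/
structure ERing (R : Type*) [Ring R] where
  E : Set R
  zero_mem : (0 : R) ∈ E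
  one_mem : (1 : R) ∈ E
  compl_mem : ∀ e ∈ E, 1 - e ∈ E
  epos_i : ∀ a ∈ AddSubmonoid.closure E, -a ∈ AddSubmonoid.closure E → a = 0
  epos_ii : ∀ a ∈ AddSubmonoid.closure E, 1 - a ∈ AddSubmonoid.closure E → a ∈ E
  epos_iii : ∀ a ∈ AddSubmonoid.closure E, ∀ b ∈ AddSubmonoid.closure E,
    a * b = b * a → a * b ∈ AddSubmonoid.closure E
  epos_iv : ∀ a ∈ AddSubmonoid.closure E, ∀ b ∈ AddSubmonoid.closure E,
    a * b * a ∈ AddSubmonoid.closure E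
  epos_v : ∀ a ∈ AddSubmonoid.closure E, ∀ b ∈ AddSubmonoid.closure E,
    a * b * a = 0 → a * b = 0 ∧ b * a = 0
  epos_vi : ∀ a ∈ AddSubmonoid.closure E, ∀ b ∈ AddSubmonoid.closure E,
    (a - b) ^ 2 ∈ AddSubmonoid.closure E
  zero_ne_one : (0 : R) ≠ 1

namespace ERing

variable {R : Type*} [Ring R] (er : ERing R)

/-- `E⁺`, the set of all finite sums of effects; the positive cone of the directed group. -/
def Epos : Set R := (AddSubmonoid.closure er.E : Set R)

/-- The directed group `G = E⁺ - E⁺` of the e-ring. -/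
def G : Set R := {g | ∃ a ∈ er.Epos, ∃ b ∈ er.Epos, g = a - b}

/-- The partial order on the directed group: `g ≤ h` iff `h - g ∈ E⁺`. -/
def le (g h : R) : Prop := h - g ∈ er.Epos

/-- The set of projections `P = {p ∈ G : p = p²}`. -/
def P : Set R := {p | p ∈ er.G ∧ p = p ^ 2}

/-- The commutant in `G` of a subset `A ⊆ G`. -/
def commutant (A : Set R) : Set R := {g | g ∈ er.G ∧ ∀ a ∈ A, g * a = a * g}

/-- The bicommutant in `G` of a subset `A ⊆ G`. -/
def CC (A : Set R) : Set R := er.commutant (er.commutant A)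

/-- `s` is the supremum of `A` within the subset `S` (w.r.t. the e-ring order). -/
def IsSupIn (S A : Set R) (s : R) : Prop :=
  s ∈ S ∧ (∀ a ∈ A, er.le a s) ∧ ∀ b ∈ S, (∀ a ∈ A, er.le a b) → er.le s b

/-- `s` is the infimum of `A` within the subset `S` (w.r.t. the e-ring order). -/
def IsInfIn (S A : Set R) (s : R) : Prop :=
  s ∈ S ∧ (∀ a ∈ A, er.le s a) ∧ ∀ b ∈ S, (∀ a ∈ A, er.le b a) → er.le b s

/-- Quadratic annihilation property. -/
def HasQA : Prop := ∀ g ∈ er.G, ∀ h ∈ er.G, g * h ^ 2 * g = 0 → g * h = 0 ∧ h * g = 0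

/-- Commutative Vigier property: every ascending sequence of pairwise commuting elements
of `G` bounded above in `G` has a supremum in `G` which double commutes with the sequence. -/
def HasCV : Prop :=
  ∀ g : ℕ → R, (∀ n, g n ∈ er.G) → (∀ n, er.le (g n) (g (n + 1))) →
    (∀ m n, g m * g n = g n * g m) → (∃ b ∈ er.G, ∀ n, er.le (g n) b) →
    ∃ s, er.IsSupIn er.G (Set.range g) s ∧ s ∈ er.CC (Set.range g)

/-- `G` is an abstract Hermitian (AH) algebra: there is a semitransparent effect `½`,
`G` has quadratic annihilation, and `G` has the commutative Vigier property. -/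
def IsAH : Prop := (∃ h ∈ er.E, h + h = 1) ∧ er.HasQA ∧ er.HasCV

end ERing

namespace ERing

variable {R : Type*} [Ring R] (er : ERing R)

/-- `m` is the absolute value `|g| = (g²)^(1/2)` of `g`: `m ∈ G`, `0 ≤ m`, `m² = g²`. -/
def IsAbs (g m : R) : Prop := m ∈ er.G ∧ er.le 0 m ∧ m ^ 2 = g ^ 2

/-- `a` is the positive part `g⁺ = ½(|g| + g)` of `g`, i.e. `a ∈ G` and `a + a = |g| + g`. -/
def IsPosPart (g a : R) : Prop := a ∈ er.G ∧ ∃ m, er.IsAbs g m ∧ a + a = m + g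

/-- `b` is the negative part `g⁻ = ½(|g| − g)` of `g`, i.e. `b ∈ G` and `b + b = |g| − g`. -/
def IsNegPart (g b : R) : Prop := b ∈ er.G ∧ ∃ m, er.IsAbs g m ∧ b + b = m - g

/-- `p` is the carrier projection `g°` of `g`. -/
def IsCarrier (g p : R) : Prop := p ∈ er.P ∧ ∀ h ∈ er.G, (g * h = 0 ↔ p * h = 0)

end ERing
namespace ERing

variable {R : Type*} [Ring R] {er : ERing R}

lemma mem_epos_iff {a : R} : a ∈ er.Epos ↔ a ∈ AddSubmonoid.closure er.E := Iff.rfl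

lemma zero_epos : (0:R) ∈ er.Epos := AddSubmonoid.zero_mem _

lemma E_epos {a : R} (ha : a ∈ er.E) : a ∈ er.Epos := AddSubmonoid.subset_closure ha

lemma one_epos : (1:R) ∈ er.Epos := E_epos er.one_mem

lemma add_epos {a b : R} (ha : a ∈ er.Epos) (hb : b ∈ er.Epos) : a + b ∈ er.Epos :=
  AddSubmonoid.add_mem _ ha hb

lemma nat_epos (n : ℕ) : ((n:R)) ∈ er.Epos := by
  induction n with
  | zero => simpa using (zero_epos (er := er))
  | succ k ih => push_cast; exact add_epos ih one_epos

lemma epos_G {a : R} (ha : a ∈ er.Epos) : a ∈ er.G :=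
  ⟨a, ha, 0, zero_epos, by abel⟩

lemma G_zero : (0:R) ∈ er.G := epos_G zero_epos
lemma G_one : (1:R) ∈ er.G := epos_G one_epos

lemma G_add {a b : R} (ha : a ∈ er.G) (hb : b ∈ er.G) : a + b ∈ er.G := by
  obtain ⟨x, hx, y, hy, rfl⟩ := ha
  obtain ⟨z, hz, w, hw, rfl⟩ := hb
  exact ⟨x + z, add_epos hx hz, y + w, add_epos hy hw, by abel⟩

lemma G_neg {a : R} (ha : a ∈ er.G) : -a ∈ er.G := by
  obtain ⟨x, hx, y, hy, rfl⟩ := ha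
  exact ⟨y, hy, x, hx, by abel⟩

lemma G_sub {a b : R} (ha : a ∈ er.G) (hb : b ∈ er.G) : a - b ∈ er.G := by
  simpa [sub_eq_add_neg] using G_add ha (G_neg hb)

lemma sq_epos {g : R} (hg : g ∈ er.G) : g ^ 2 ∈ er.Epos := by
  obtain ⟨a, ha, b, hb, rfl⟩ := hg
  exact er.epos_vi a ha b hb

lemma epos_eq_zero {a : R} (h1 : a ∈ er.Epos) (h2 : -a ∈ er.Epos) : a = 0 :=
  er.epos_i a h1 h2

lemma mul_epos {a b : R} (ha : a ∈ er.Epos) (hb : b ∈ er.Epos) (h : a * b = b * a) :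
    a * b ∈ er.Epos := er.epos_iii a ha b hb h

lemma natmul_epos (n : ℕ) {a : R} (ha : a ∈ er.Epos) : (n:R) * a ∈ er.Epos := by
  induction n with
  | zero => simpa using (zero_epos (er := er))
  | succ k ih => push_cast; rw [add_mul, one_mul]; exact add_epos ih ha

lemma natmul_G (n : ℕ) {a : R} (ha : a ∈ er.G) : (n:R) * a ∈ er.G := by
  obtain ⟨x, hx, y, hy, rfl⟩ := ha
  exact ⟨(n:R)*x, natmul_epos n hx, (n:R)*y, natmul_epos n hy, by rw [mul_sub]⟩

/-! ### QA consequences -/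

lemma sq_eq_zero (hQA : er.HasQA) {g : R} (hg : g ∈ er.G) (h : g ^ 2 = 0) : g = 0 := by
  have := (hQA 1 G_one g hg (by rw [one_mul, mul_one]; exact h)).1
  rwa [one_mul] at this

lemma add_self_eq_zero (hQA : er.HasQA) {g : R} (hg : g ∈ er.G) (h : g + g = 0) : g = 0 := by
  have h2 : g ^ 2 + g ^ 2 = 0 := by
    have : g * (g + g) = g * 0 := by rw [h]
    rw [mul_add, mul_zero, ← pow_two] at this
    exact this
  have hneg : -(g ^ 2) = g ^ 2 := neg_eq_of_add_eq_zero_left h2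
  have hz : g ^ 2 = 0 := epos_eq_zero (sq_epos hg) (by rw [hneg]; exact sq_epos hg)
  exact sq_eq_zero hQA hg hz

end ERing
namespace ERing

variable {R : Type*} [Ring R] {er : ERing R}
set_option linter.unusedSectionVars false

lemma mul_eq_zero_symm (hQA : er.HasQA) {a h : R} (ha : a ∈ er.G) (hh : h ∈ er.G)
    (e : a * h = 0) : h * a = 0 := by
  have key : h * a ^ 2 * h = 0 := by
    have : h * a ^ 2 * h = (h * a) * (a * h) := by noncomm_ring
    rw [this, e, mul_zero]
  exact (hQA h hh a ha key).1

section Half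
variable {u : R} (hu : u ∈ er.E) (huu : u + u = 1)
include hu huu

lemma two_half (x : R) : u * x + u * x = x := by
  rw [← add_mul, huu, one_mul]

lemma half_double (x : R) : u * (x + x) = x := by
  rw [mul_add]; exact two_half hu huu x

lemma half_comm (hQA : er.HasQA) {g : R} (hg : g ∈ er.G) : u * g = g * u := by
  have huG : u ∈ er.G := epos_G (E_epos hu)
  have hsG : g * u + u * g ∈ er.G := by
    have h1 : g * u + u * g = (g + u) ^ 2 - g ^ 2 - u ^ 2 := by noncomm_ring
    rw [h1]
    exact G_sub (G_sub (epos_G (sq_epos (G_add hg huG))) (epos_G (sq_epos hg)))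
      (epos_G (sq_epos huG))
  have hdG : g * u - u * g ∈ er.G := by
    have h2 : g * u - u * g = g - (g * u + u * g) := by
      have h3 : g * u + g * u = g := by rw [← mul_add, huu, mul_one]
      nth_rewrite 3 [← h3]; abel
    rw [h2]; exact G_sub hg hsG
  have hdd : (g * u - u * g) + (g * u - u * g) = 0 := by
    have h3 : g * u + g * u = g := by rw [← mul_add, huu, mul_one]
    have h4 : u * g + u * g = g := two_half hu huu g
    calc (g * u - u * g) + (g * u - u * g) = (g * u + g * u) - (u * g + u * g) := by abel
    _ = 0 := by rw [h3, h4, sub_self]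
  have := add_self_eq_zero hQA hdG hdd
  have h5 : g * u = u * g := by
    have := sub_eq_zero.mp this
    exact this
  exact h5.symm

lemma half_mul_epos (hQA : er.HasQA) {a : R} (ha : a ∈ er.Epos) : u * a ∈ er.Epos :=
  mul_epos (E_epos hu) ha (half_comm hu huu hQA (epos_G ha))

lemma half_mul_G (hQA : er.HasQA) {a : R} (ha : a ∈ er.G) : u * a ∈ er.G := by
  obtain ⟨x, hx, y, hy, rfl⟩ := ha
  rw [mul_sub]
  exact G_sub (epos_G (half_mul_epos hu huu hQA hx)) (epos_G (half_mul_epos hu huu hQA hy))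

lemma half_unique (hQA : er.HasQA) {x y : R} (hx : x ∈ er.G) (hy : y ∈ er.G)
    (h : x + x = y + y) : x = y := by
  have : (x - y) + (x - y) = 0 := by
    have : (x - y) + (x - y) = (x + x) - (y + y) := by abel
    rw [this, h, sub_self]
  have := add_self_eq_zero hQA (G_sub hx hy) this
  exact sub_eq_zero.mp this

lemma comm_mul_G (hQA : er.HasQA) {g h : R} (hg : g ∈ er.G) (hh : h ∈ er.G)
    (hc : g * h = h * g) : g * h ∈ er.G := by
  have h1 : (g * h) + (g * h) = (g + h) ^ 2 - g ^ 2 - h ^ 2 := by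
    have : (g + h) ^ 2 = g ^ 2 + (g * h + h * g) + h ^ 2 := by noncomm_ring
    rw [this, ← hc]; abel
  have h2 : (g + h) ^ 2 - g ^ 2 - h ^ 2 ∈ er.G :=
    G_sub (G_sub (epos_G (sq_epos (G_add hg hh))) (epos_G (sq_epos hg))) (epos_G (sq_epos hh))
  have h4 : u * ((g + h) ^ 2 - g ^ 2 - h ^ 2) = g * h := by
    rw [← h1, mul_add]; exact two_half hu huu _
  rw [← h4]
  exact half_mul_G hu huu hQA h2

end Half

lemma conj_epos_G {g x : R} (hg : g ∈ er.G) (hx : x ∈ er.Epos) : g * x * g ∈ er.G := by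
  obtain ⟨a, ha, b, hb, rfl⟩ := hg
  have key : (a - b) * x * (a - b)
      = (a * x * a + a * x * a + (b * x * b + b * x * b)) - (a + b) * x * (a + b) := by
    noncomm_ring
  rw [key]
  exact G_sub (epos_G (add_epos (add_epos (er.epos_iv a ha x hx) (er.epos_iv a ha x hx))
    (add_epos (er.epos_iv b hb x hx) (er.epos_iv b hb x hx))))
    (epos_G (er.epos_iv _ (add_epos ha hb) x hx))

lemma conj_G {g x : R} (hg : g ∈ er.G) (hx : x ∈ er.G) : g * x * g ∈ er.G := by
  obtain ⟨c, hc, d, hd, rfl⟩ := hx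
  have : g * (c - d) * g = g * c * g - g * d * g := by noncomm_ring
  rw [this]
  exact G_sub (conj_epos_G hg hc) (conj_epos_G hg hd)

lemma exists_nat_bound {a : R} (ha : a ∈ er.Epos) : ∃ n : ℕ, (n:R) - a ∈ er.Epos := by
  induction ha using AddSubmonoid.closure_induction with
  | mem x hx => exact ⟨1, by simpa using E_epos (er.compl_mem x hx)⟩
  | zero => exact ⟨0, by simpa using (zero_epos (er := er))⟩
  | add x y hx hy ihx ihy =>
      obtain ⟨n, hn⟩ := ihx
      obtain ⟨m, hm⟩ := ihy
      exact ⟨n + m, by push_cast; have := add_epos hn hm; convert this using 1; abel⟩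

end ERing
namespace ERing

variable {R : Type*} [Ring R] {er : ERing R}
set_option linter.unusedSectionVars false

section Half
variable {u : R} (hu : u ∈ er.E) (huu : u + u = 1)
include hu huu

lemma upow_epos (k : ℕ) (hQA : er.HasQA) : u ^ k ∈ er.Epos := by
  induction k with
  | zero => simpa using (one_epos (er := er))
  | succ n ih =>
      rw [pow_succ]
      exact mul_epos ih (E_epos hu) (half_comm hu huu hQA (epos_G ih)).symm

lemma upow_mul_epos (k : ℕ) (hQA : er.HasQA) {a : R} (ha : a ∈ er.Epos) :
    u ^ k * a ∈ er.Epos := by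
  induction k with
  | zero => simpa using ha
  | succ n ih =>
      rw [pow_succ', mul_assoc]
      exact half_mul_epos hu huu hQA ih

lemma upow_mul_G (k : ℕ) (hQA : er.HasQA) {a : R} (ha : a ∈ er.G) :
    u ^ k * a ∈ er.G := by
  induction k with
  | zero => simpa using ha
  | succ n ih =>
      rw [pow_succ', mul_assoc]
      exact half_mul_G hu huu hQA ih

lemma upow_cancel (k : ℕ) : (2:R) ^ k * u ^ k = 1 := by
  induction k with
  | zero => simp
  | succ n ih =>
      rw [pow_succ, pow_succ', mul_assoc, ← mul_assoc 2 u, two_mul, huu, one_mul, ih]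

lemma upow_cancel' (k : ℕ) : u ^ k * (2:R) ^ k = 1 := by
  induction k with
  | zero => simp
  | succ n ih =>
      rw [pow_succ, pow_succ' (2:R), mul_assoc, ← mul_assoc u 2, mul_two, huu, one_mul, ih]

lemma scale01 (hQA : er.HasQA) {a : R} (ha : a ∈ er.Epos) :
    ∃ k : ℕ, u ^ (2 * k) * a ∈ er.Epos ∧ 1 - u ^ (2 * k) * a ∈ er.Epos ∧
      a = (2:R) ^ (2 * k) * (u ^ (2 * k) * a) := by
  obtain ⟨n, hn⟩ := exists_nat_bound ha
  refine ⟨n, upow_mul_epos hu huu _ hQA ha, ?_, ?_⟩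
  · have hle : n ≤ 2 ^ (2 * n) :=
      Nat.le_of_lt (lt_of_lt_of_le (Nat.lt_two_pow_self (n := n))
        (Nat.pow_le_pow_right (by norm_num) (by omega)))
    have h1 : (2:R) ^ (2 * n) - a ∈ er.Epos := by
      have e : (2:R) ^ (2 * n) - a = ((2 ^ (2 * n) - n : ℕ) : R) + ((n:R) - a) := by
        push_cast [Nat.cast_sub hle]; abel
      rw [e]
      exact add_epos (nat_epos _) hn
    have e2 : 1 - u ^ (2 * n) * a = u ^ (2 * n) * ((2:R) ^ (2 * n) - a) := by
      rw [mul_sub, ← upow_cancel' hu huu (2 * n)]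
    rw [e2]
    exact upow_mul_epos hu huu _ hQA h1
  · rw [← mul_assoc, upow_cancel hu huu (2 * n), one_mul]

lemma sqrt01 (hQA : er.HasQA) (hCV : er.HasCV) {h : R} (hh : h ∈ er.Epos)
    (hh1 : 1 - h ∈ er.Epos) :
    ∃ s ∈ er.G, s ∈ er.Epos ∧ s ^ 2 = h ∧ ∀ z ∈ er.G, z * h = h * z → z * s = s * z := by
  have hhG : h ∈ er.G := epos_G hh
  set x : ℕ → R := fun k => Nat.rec 0 (fun _ xk => xk + u * (h - xk ^ 2)) k with hxdef
  set D : ℕ → R := fun k => u * (h - (x k) ^ 2) with hDdef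
  have hx0 : x 0 = 0 := rfl
  have hxs : ∀ k, x (k + 1) = x k + D k := fun k => rfl
  have hG : ∀ k, x k ∈ er.G := by
    intro k
    induction k with
    | zero => rw [hx0]; exact G_zero
    | succ n ih =>
        rw [hxs]
        exact G_add ih (half_mul_G hu huu hQA (G_sub hhG (epos_G (sq_epos ih))))
  have hcz : ∀ z ∈ er.G, Commute z h → ∀ k, Commute z (x k) := by
    intro z hz hzh k
    induction k with
    | zero => rw [hx0]; exact Commute.zero_right z
    | succ n ih =>
        rw [hxs]
        have hcu : Commute z u := (half_comm hu huu hQA hz).symm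
        exact ih.add_right (hcu.mul_right (hzh.sub_right (ih.pow_right 2)))
  have hch : ∀ k, Commute h (x k) := hcz h hhG (Commute.refl h)
  have hy : ∀ k, 1 - x k ∈ er.Epos := by
    intro k
    induction k with
    | zero => rw [hx0]; simpa using (one_epos (er := er))
    | succ n ih =>
        have key : 1 - x (n + 1) = u * ((1 - x n) ^ 2 + (1 - h)) := by
          have e : (1 - x n) ^ 2 + (1 - h) = ((1 - x n) + (1 - x n)) + ((x n) ^ 2 - h) := by
            noncomm_ring
          rw [hxs, e, mul_add, half_double hu huu]
          have e2 : u * ((x n) ^ 2 - h) = -(u * (h - (x n) ^ 2)) := by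
            rw [mul_sub, mul_sub]; abel
          rw [e2, hDdef]; abel
        rw [key]
        exact half_mul_epos hu huu hQA
          (add_epos (sq_epos (G_sub G_one (hG n))) hh1)
  have hDD : ∀ k, D k + D k = h - (x k) ^ 2 := fun k => two_half hu huu _
  have hδ : ∀ k, h - (x k) ^ 2 ∈ er.Epos := by
    intro k
    induction k with
    | zero => rw [hx0]; simpa using hh
    | succ n ih =>
        have hDE : D n ∈ er.Epos := half_mul_epos hu huu hQA ih
        have cxu : Commute u (x n) := half_comm hu huu hQA (hG n)
        have cDx : Commute (D n) (x n) :=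
          Commute.mul_left cxu ((hch n).sub_left ((Commute.refl (x n)).pow_left 2))
        have key : h - (x (n + 1)) ^ 2 = D n * ((1 - x n) + (1 - x (n + 1))) := by
          rw [hxs]
          have e1 : h - (x n + D n) ^ 2
              = (h - (x n) ^ 2) - ((x n) * (D n) + (D n) * (x n) + (D n) ^ 2) := by
            noncomm_ring
          rw [e1, ← hDD n, ← cDx.eq]
          noncomm_ring
        rw [key]
        refine mul_epos hDE (add_epos (hy n) (hy (n + 1))) ?_
        have cDx1 : Commute (D n) (x (n + 1)) := by
          rw [hxs]; exact cDx.add_right (Commute.refl (D n))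
        exact (((Commute.one_right (D n)).sub_right cDx).add_right
          ((Commute.one_right (D n)).sub_right cDx1)).eq
  have hDE : ∀ k, D k ∈ er.Epos := fun k => half_mul_epos hu huu hQA (hδ k)
  have hpos : ∀ k, x k ∈ er.Epos := by
    intro k
    induction k with
    | zero => rw [hx0]; exact zero_epos
    | succ n ih => rw [hxs]; exact add_epos ih (hDE n)
  have hmono : ∀ k, er.le (x k) (x (k + 1)) := by
    intro k
    show x (k + 1) - x k ∈ er.Epos
    rw [hxs, add_sub_cancel_left]
    exact hDE k
  have hcomm2 : ∀ m n, x m * x n = x n * x m :=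
    fun m n => (hcz (x m) (hG m) (hch m).symm n).eq
  obtain ⟨s, ⟨hsG, hub, hlub⟩, hsCC⟩ :=
    hCV x hG hmono hcomm2 ⟨1, G_one, fun n => hy n⟩
  have hub' : ∀ k, s - x k ∈ er.Epos := fun k => hub (x k) ⟨k, rfl⟩
  have hsE : s ∈ er.Epos := by
    have hx1 : x 1 = u * h := by
      have h1 := hxs 0
      rw [hx0] at h1
      simpa [hDdef, hx0] using h1
    have e : s = (s - x 1) + x 1 := by abel
    rw [e, hx1]
    exact add_epos (by rw [← hx1]; exact hub' 1) (half_mul_epos hu huu hQA hh)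
  have hs1 : 1 - s ∈ er.Epos :=
    hlub 1 G_one (fun a ha => by obtain ⟨k, rfl⟩ := ha; exact hy k)
  have hsCz : ∀ z ∈ er.G, Commute z h → s * z = z * s := fun z hz hzh =>
    hsCC.2 z ⟨hz, fun a ha => by obtain ⟨k, rfl⟩ := ha; exact (hcz z hz hzh k).eq⟩
  have csx : ∀ k, Commute s (x k) :=
    fun k => hsCz (x k) (hG k) (hch k).symm
  have csh : Commute s h := hsCz h hhG (Commute.refl h)
  have hle2 : ∀ c ∈ er.G, (∀ k, ((s - x k) + (s - x k)) - c ∈ er.Epos) → -c ∈ er.Epos := by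
    intro c hc hck
    have h1 : ∀ k, (s - u * c) - x k ∈ er.Epos := by
      intro k
      have e : (s - u * c) - x k = u * (((s - x k) + (s - x k)) - c) := by
        rw [mul_sub, half_double hu huu]; abel
      rw [e]
      exact half_mul_epos hu huu hQA (hck k)
    have h2 : er.le s (s - u * c) :=
      hlub _ (G_sub hsG (half_mul_G hu huu hQA hc))
        (fun a ha => by obtain ⟨k, rfl⟩ := ha; exact h1 k)
    have h3 : -(u * c) ∈ er.Epos := by
      have e2 : (s - u * c) - s = -(u * c) := by abel
      have h2' : (s - u * c) - s ∈ er.Epos := h2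
      rwa [e2] at h2'
    have h4 : -c = -(u * c) + -(u * c) := by rw [← neg_add, two_half hu huu c]
    rw [h4]
    exact add_epos h3 h3
  have hprod : ∀ k, (s - x k) * (s + x k) = s ^ 2 - (x k) ^ 2 := by
    intro k
    rw [sub_mul, mul_add, mul_add, (csx k).eq]
    noncomm_ring
  have hA : ∀ k, ((s - x k) + (s - x k)) - (h - s ^ 2) ∈ er.Epos := by
    intro k
    have hhh : h = (x k) ^ 2 + (D k + D k) := by rw [hDD k]; abel
    have key : ((s - x k) + (s - x k)) - (h - s ^ 2)
        = ((s - x (k + 1)) + (s - x (k + 1))) + (s - x k) * (s + x k) := by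
      rw [hprod, hxs k, hhh]
      abel
    rw [key]
    refine add_epos (add_epos (hub' (k + 1)) (hub' (k + 1))) ?_
    refine mul_epos (hub' k) (add_epos hsE (hpos k)) ?_
    exact (((Commute.refl s).sub_left (csx k).symm).add_right
      ((csx k).sub_left (Commute.refl (x k)))).eq
  have hB : ∀ k, ((s - x k) + (s - x k)) - (s ^ 2 - h) ∈ er.Epos := by
    intro k
    have hhh : h = (x k) ^ 2 + (D k + D k) := by rw [hDD k]; abel
    have hprod2 : (s - x k) * ((1 - s) + (1 - x k))
        = ((s - x k) + (s - x k)) - (s ^ 2 - (x k) ^ 2) := by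
      have e0 : (1 - s) + (1 - x k) = (1 + 1) - (s + x k) := by abel
      rw [e0, mul_sub, hprod k, mul_add, mul_one]
    have key : ((s - x k) + (s - x k)) - (s ^ 2 - h)
        = (D k + D k) + (s - x k) * ((1 - s) + (1 - x k)) := by
      rw [hprod2, hhh]
      abel
    rw [key]
    refine add_epos (add_epos (hDE k) (hDE k)) ?_
    refine mul_epos (hub' k) (add_epos hs1 (hy k)) ?_
    have c1 : Commute (s - x k) (1 - s) :=
      (Commute.one_right _).sub_right ((Commute.refl s).sub_left (csx k).symm)
    have c2 : Commute (s - x k) (1 - x k) :=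
      (Commute.one_right _).sub_right ((csx k).sub_left (Commute.refl (x k)))
    exact (c1.add_right c2).eq
  have cA := hle2 (h - s ^ 2) (G_sub hhG (epos_G (sq_epos hsG))) hA
  have cB := hle2 (s ^ 2 - h) (G_sub (epos_G (sq_epos hsG)) hhG) hB
  rw [neg_sub] at cA
  have h0 : s ^ 2 - h = 0 := epos_eq_zero cA cB
  have hs2 : s ^ 2 = h := sub_eq_zero.mp h0
  exact ⟨s, hsG, hsE, hs2, fun z hz hzh => (hsCz z hz hzh).symm⟩

end Half

end ERing
namespace ERing

variable {R : Type*} [Ring R] {er : ERing R}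
set_option linter.unusedSectionVars false

lemma central_two (x : R) : Commute (2:R) x := by
  show (2:R) * x = x * 2
  rw [two_mul, mul_two]

section Half
variable {u : R} (hu : u ∈ er.E) (huu : u + u = 1)
include hu huu

lemma sqrt_ex (hQA : er.HasQA) (hCV : er.HasCV) {h : R} (hh : h ∈ er.Epos) :
    ∃ r ∈ er.G, r ∈ er.Epos ∧ r ^ 2 = h ∧ ∀ z ∈ er.G, z * h = h * z → z * r = r * z := by
  obtain ⟨k, hb, hb1, hba⟩ := scale01 hu huu hQA hh
  obtain ⟨s, hsG, hsE, hs2, hsC⟩ := sqrt01 hu huu hQA hCV hb hb1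
  have hcast : ((2 ^ k : ℕ) : R) = (2:R) ^ k := by rw [Nat.cast_pow, Nat.cast_ofNat]
  refine ⟨(2:R) ^ k * s, ?_, ?_, ?_, ?_⟩
  · rw [← hcast]; exact natmul_G _ hsG
  · rw [← hcast]; exact natmul_epos _ hsE
  · have c2s : Commute ((2:R) ^ k) s := (central_two s).pow_left k
    have e : ((2:R) ^ k * s) ^ 2 = ((2:R) ^ k) ^ 2 * s ^ 2 := c2s.mul_pow 2
    have e2 : ((2:R) ^ k) ^ 2 = (2:R) ^ (2 * k) := by rw [← pow_mul, Nat.mul_comm]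
    rw [e, e2, hs2]
    exact hba.symm
  · intro z hz hzh
    have hzu : Commute z u := (half_comm hu huu hQA hz).symm
    have hzs : Commute z s := hsC z hz ((hzu.pow_right _).mul_right hzh)
    exact ((central_two z).symm.pow_right k).mul_right hzs

end Half

lemma sqrt_unique (hQA : er.HasQA) {r t : R} (hr : r ∈ er.Epos) (ht : t ∈ er.Epos)
    (hc : r * t = t * r) (h2 : r ^ 2 = t ^ 2) : r = t := by
  have crt : Commute r t := hc
  set d := r - t with hd
  have hdG : d ∈ er.G := G_sub (epos_G hr) (epos_G ht)
  have h0 : d * (r + t) = 0 := by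
    rw [hd, sub_mul, mul_add, mul_add, ← pow_two, ← pow_two, hc, h2]; abel
  have h1 : d ^ 2 * r + d ^ 2 * t = 0 := by
    rw [← mul_add, pow_two, mul_assoc, h0, mul_zero]
  have cdr : Commute d r := (Commute.refl r).sub_left crt.symm
  have cdt : Commute d t := crt.sub_left (Commute.refl t)
  have hd2r : d ^ 2 * r ∈ er.Epos := mul_epos (sq_epos hdG) hr (cdr.pow_left 2).eq
  have hd2t : d ^ 2 * t ∈ er.Epos := mul_epos (sq_epos hdG) ht (cdt.pow_left 2).eq
  have hr0 : d ^ 2 * r = 0 :=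
    epos_eq_zero hd2r (by rw [neg_eq_of_add_eq_zero_right h1]; exact hd2t)
  have ht0 : d ^ 2 * t = 0 :=
    epos_eq_zero hd2t (by rw [neg_eq_of_add_eq_zero_left h1]; exact hd2r)
  have hd3 : d ^ 2 * d = 0 := by
    have e : d ^ 2 * d = d ^ 2 * r - d ^ 2 * t := by rw [← mul_sub]
    rw [e, hr0, ht0, sub_zero]
  have hd4 : (d ^ 2) ^ 2 = 0 := by
    have e : (d ^ 2) ^ 2 = d ^ 2 * d * d := by noncomm_ring
    rw [e, hd3, zero_mul]
  have hd2 : d ^ 2 = 0 := sq_eq_zero hQA (epos_G (sq_epos hdG)) hd4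
  have hd0 : d = 0 := sq_eq_zero hQA hdG hd2
  have := sub_eq_zero.mp (hd ▸ hd0)
  exact this

section Half
variable {u : R} (hu : u ∈ er.E) (huu : u + u = 1)
include hu huu

lemma abs_spec (hQA : er.HasQA) (hCV : er.HasCV) {g m : R} (hg : g ∈ er.G)
    (hm : er.IsAbs g m) :
    m ∈ er.Epos ∧ g * m = m * g ∧ ∀ z ∈ er.G, z * g = g * z → z * m = m * z := by
  obtain ⟨hmG, hm0, hm2⟩ := hm
  have hmE : m ∈ er.Epos := by
    have h' : m - 0 ∈ er.Epos := hm0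
    rwa [sub_zero] at h'
  obtain ⟨r, hrG, hrE, hr2, hrC⟩ := sqrt_ex hu huu hQA hCV (sq_epos hg)
  have hmg2 : m * g ^ 2 = g ^ 2 * m := by
    rw [← hm2]; exact ((Commute.refl m).pow_right 2).eq
  have hmr : m * r = r * m := hrC m hmG hmg2
  have heq : r = m :=
    sqrt_unique hQA hrE hmE hmr.symm (by rw [hr2, hm2])
  refine ⟨hmE, ?_, ?_⟩
  · have h3 := hrC g hg ((Commute.refl g).pow_right 2).eq
    rwa [heq] at h3
  · intro z hz hzg
    have hzg2 : z * g ^ 2 = g ^ 2 * z := ((show Commute z g from hzg).pow_right 2).eq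
    have h4 := hrC z hz hzg2
    rwa [heq] at h4

lemma posneg (hQA : er.HasQA) (hCV : er.HasCV) {g m : R} (hg : g ∈ er.G)
    (hmE : m ∈ er.Epos) (hm2 : m ^ 2 = g ^ 2) (hgm : g * m = m * g) :
    m + g ∈ er.Epos ∧ m - g ∈ er.Epos := by
  have hmG : m ∈ er.G := epos_G hmE
  have cmg : Commute m g := hgm.symm
  set v1 := m + g with hv1
  set v2 := m - g with hv2
  have hv1G : v1 ∈ er.G := G_add hmG hg
  have hv2G : v2 ∈ er.G := G_sub hmG hg
  have cmv1 : Commute m v1 := (Commute.refl m).add_right cmg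
  have cmv2 : Commute m v2 := (Commute.refl m).sub_right cmg
  have cgv1 : Commute g v1 := cmg.symm.add_right (Commute.refl g)
  have cgv2 : Commute g v2 := cmg.symm.sub_right (Commute.refl g)
  have c12 : Commute v1 v2 := cmv2.add_left cgv2
  have h12 : v1 * v2 = 0 := by
    rw [hv1, hv2, add_mul, mul_sub, mul_sub, ← pow_two, ← pow_two, hm2, hgm]; abel
  have h21 : v2 * v1 = 0 := by rw [← c12.eq]; exact h12
  obtain ⟨s, hsG, hsE, hs2, hsC⟩ := sqrt_ex hu huu hQA hCV (sq_epos hv1G)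
  obtain ⟨t, htG, htE, ht2, htC⟩ := sqrt_ex hu huu hQA hCV (sq_epos hv2G)
  have csv1 : Commute s v1 := by
    have := hsC v1 hv1G ((Commute.refl v1).pow_right 2).eq
    exact (show Commute v1 s from this).symm
  have csv2 : Commute s v2 := by
    have h5 : v2 * v1 ^ 2 = v1 ^ 2 * v2 := by
      rw [pow_two, ← mul_assoc, h21, zero_mul, mul_assoc, h12, mul_zero]
    exact (show Commute v2 s from hsC v2 hv2G h5).symm
  have ctv2 : Commute t v2 := by
    have := htC v2 hv2G ((Commute.refl v2).pow_right 2).eq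
    exact (show Commute v2 t from this).symm
  have ctv1 : Commute t v1 := by
    have h5 : v1 * v2 ^ 2 = v2 ^ 2 * v1 := by
      rw [pow_two, ← mul_assoc, h12, zero_mul, mul_assoc, h21, mul_zero]
    exact (show Commute v1 t from htC v1 hv1G h5).symm
  have cst : Commute s t := htC s hsG (csv2.pow_right 2).eq
  have csm : Commute s m := by
    exact (show Commute m s from hsC m hmG ((cmv1.pow_right 2).eq)).symm
  have ctm : Commute t m := by
    exact (show Commute m t from htC m hmG ((cmv2.pow_right 2).eq)).symm
  have hsqst : (s * t) ^ 2 = 0 := by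
    calc (s * t) ^ 2 = s * (t * s) * t := by noncomm_ring
    _ = s * (s * t) * t := by rw [← cst.eq]
    _ = s ^ 2 * t ^ 2 := by noncomm_ring
    _ = v1 ^ 2 * v2 ^ 2 := by rw [hs2, ht2]
    _ = v1 * (v1 * v2) * v2 := by noncomm_ring
    _ = 0 := by rw [h12, mul_zero, zero_mul]
  have stG : s * t ∈ er.G := comm_mul_G hu huu hQA hsG htG cst.eq
  have st0 : s * t = 0 := sq_eq_zero hQA stG hsqst
  have ts0 : t * s = 0 := by rw [← cst.eq]; exact st0
  have hsum : s + t = m + m := by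
    refine sqrt_unique hQA (add_epos hsE htE) (add_epos hmE hmE) ?_ ?_
    · exact ((csm.add_right csm).add_left ((ctm.add_right ctm))).eq
    · have e1 : (s + t) ^ 2 = s ^ 2 + (s * t + t * s) + t ^ 2 := by noncomm_ring
      have e2 : v1 ^ 2 + v2 ^ 2 = (m ^ 2 + m ^ 2) + (g ^ 2 + g ^ 2) := by
        rw [hv1, hv2]; noncomm_ring
      have e3 : (m + m) ^ 2 = (m ^ 2 + m ^ 2) + (m ^ 2 + m ^ 2) := by noncomm_ring
      have e4 : v1 ^ 2 + (0 + 0) + v2 ^ 2 = (m ^ 2 + m ^ 2) + (g ^ 2 + g ^ 2) := by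
        rw [← e2]; abel
      rw [e1, st0, ts0, hs2, ht2, e4, e3, ← hm2]
  set d := s - v1 with hd
  have hdG : d ∈ er.G := G_sub hsG hv1G
  have hd_alt : d = v2 - t := by
    have hs_eq : s = (m + m) - t := by rw [← hsum]; abel
    rw [hd, hs_eq, hv1, hv2]; abel
  have hdsv : d * (s + v1) = 0 := by
    have e : (s - v1) * (s + v1) = (s ^ 2 - v1 ^ 2) + (s * v1 - v1 * s) := by noncomm_ring
    rw [hd, e, hs2, csv1.eq]; abel
  have hdtv : d * (t + v2) = 0 := by
    have e : (v2 - t) * (t + v2) = (v2 ^ 2 - t ^ 2) + (v2 * t - t * v2) := by noncomm_ring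
    rw [hd_alt, e, ht2, ← ctv2.eq]; abel
  rw [mul_add] at hdsv hdtv
  have hds_v1 : d * v1 = -(d * s) := eq_neg_of_add_eq_zero_right hdsv
  have hdt_v2 : d * v2 = -(d * t) := eq_neg_of_add_eq_zero_right hdtv
  have hd2a : d * d = d * s + d * s := by
    nth_rewrite 2 [hd]
    rw [mul_sub, hds_v1, sub_neg_eq_add]
  have hd2b : d * d = -(d * t) + -(d * t) := by
    nth_rewrite 2 [hd_alt]
    rw [mul_sub, hdt_v2]
    abel
  have csd : Commute s d := (Commute.refl s).sub_right csv1
  have hdsdt : (d * s) * (d * t) = 0 := by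
    calc (d * s) * (d * t) = d * (s * d) * t := by noncomm_ring
    _ = d * (d * s) * t := by rw [csd.eq]
    _ = (d * d) * (s * t) := by noncomm_ring
    _ = 0 := by rw [st0, mul_zero]
  have hd4 : (d * d) * (d * d) = 0 := by
    nth_rewrite 1 [hd2a]
    nth_rewrite 1 [hd2b]
    have e : (d * s + d * s) * (-(d * t) + -(d * t))
        = -((d * s) * (d * t) + ((d * s) * (d * t) + ((d * s) * (d * t) + (d * s) * (d * t)))) := by
      noncomm_ring
    rw [e, hdsdt]
    simp
  have hdd0 : d * d = 0 := by
    refine sq_eq_zero hQA ?_ ?_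
    · rw [← pow_two]; exact epos_G (sq_epos hdG)
    · rw [pow_two]; exact hd4
  have hd0 : d = 0 := sq_eq_zero hQA hdG (by rw [pow_two]; exact hdd0)
  have hv1s : v1 = s := by
    have : s - v1 = 0 := by rw [← hd]; exact hd0
    exact (sub_eq_zero.mp this).symm
  have hv2t : v2 = t := by
    have : v2 - t = 0 := by rw [← hd_alt]; exact hd0
    exact sub_eq_zero.mp this
  exact ⟨hv1s ▸ hsE, hv2t ▸ htE⟩

end Half

end ERing
namespace ERing

variable {R : Type*} [Ring R] {er : ERing R}
set_option linter.unusedSectionVars false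

lemma carrier_props (hQA : er.HasQA) {a p : R} (ha : a ∈ er.G) (hp : er.IsCarrier a p) :
    a * p = a ∧ p * a = a ∧ ∀ z ∈ er.G, z * a = a * z → z * p = p * z := by
  obtain ⟨⟨hpG, hpp⟩, hann⟩ := hp
  have hppn : p * p = p := by rw [← pow_two]; exact hpp.symm
  have h1pG : (1:R) - p ∈ er.G := G_sub G_one hpG
  have hpq0 : p * (1 - p) = 0 := by rw [mul_sub, mul_one, hppn, sub_self]
  have haq : a * (1 - p) = 0 := (hann (1 - p) h1pG).mpr hpq0
  have hap : a * p = a := by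
    have h' : a - a * p = 0 := by rw [mul_sub, mul_one] at haq; exact haq
    exact (sub_eq_zero.mp h').symm
  have hqa : (1 - p) * a = 0 := by
    apply (hQA (1 - p) h1pG a ha ?_).1
    have e : (1 - p) * a ^ 2 * (1 - p) = ((1 - p) * a) * (a * (1 - p)) := by noncomm_ring
    rw [e, haq, mul_zero]
  have hpa : p * a = a := by
    have h' : a - p * a = 0 := by rw [sub_mul, one_mul] at hqa; exact hqa
    exact (sub_eq_zero.mp h').symm
  refine ⟨hap, hpa, ?_⟩
  intro z hz hza
  have hqp0 : (1 - p) * p = 0 := by rw [sub_mul, one_mul, hppn, sub_self]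
  set q := (1:R) - p with hqdef
  set w := q * z * p + p * z * q with hw
  have hwG : w ∈ er.G := by
    have e : w = z - p * z * p - q * z * q := by rw [hw, hqdef]; noncomm_ring
    rw [e]
    exact G_sub (G_sub hz (conj_G hpG hz)) (conj_G h1pG hz)
  have haw : a * w = 0 := by
    have e : a * w = (a * q) * (z * p) + (a * p) * (z * q) := by rw [hw]; noncomm_ring
    rw [e, haq, zero_mul, hap, zero_add, ← mul_assoc, ← hza, mul_assoc, haq, mul_zero]
  have hpw : p * w = 0 := (hann w hwG).mp haw
  have hwp : w * p = 0 := mul_eq_zero_symm hQA hpG hwG hpw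
  have hpzq : p * z * q = 0 := by
    have e : p * w = (p * q) * (z * p) + (p * p) * (z * q) := by rw [hw]; noncomm_ring
    rw [e, hpq0, zero_mul, hppn, zero_add, ← mul_assoc] at hpw
    exact hpw
  have hqzp : q * z * p = 0 := by
    have e : w * p = (q * z) * (p * p) + (p * z) * (q * p) := by rw [hw]; noncomm_ring
    rw [e, hppn, hqp0, mul_zero, add_zero, mul_assoc] at hwp
    rw [mul_assoc]
    exact hwp
  have hqp1 : q + p = 1 := by rw [hqdef]; abel
  have e1 : z * p = p * z * p := by
    calc z * p = (q + p) * (z * p) := by rw [hqp1, one_mul]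
    _ = q * (z * p) + p * (z * p) := by rw [add_mul]
    _ = q * z * p + p * z * p := by rw [← mul_assoc, ← mul_assoc]
    _ = p * z * p := by rw [hqzp, zero_add]
  have e2 : p * z = p * z * p := by
    calc p * z = (p * z) * (q + p) := by rw [hqp1, mul_one]
    _ = p * z * q + p * z * p := by rw [mul_add]
    _ = p * z * p := by rw [hpzq, zero_add]
  rw [e1, ← e2]

section Half
variable {u : R} (hu : u ∈ er.E) (huu : u + u = 1)
include hu huu

lemma carrier01 (hQA : er.HasQA) (hCV : er.HasCV) {a : R} (haE : a ∈ er.Epos)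
    (ha1 : 1 - a ∈ er.Epos) : ∃ p, er.IsCarrier a p := by
  have haG : a ∈ er.G := epos_G haE
  obtain ⟨w, hwdef⟩ : ∃ w : R, w = 1 - a := ⟨_, rfl⟩
  have ha_w : a = 1 - w := by rw [hwdef]; abel
  have hwE : w ∈ er.Epos := by rw [hwdef]; exact ha1
  have hwG : w ∈ er.G := by rw [hwdef]; exact G_sub G_one haG
  obtain ⟨x, hx⟩ : ∃ x : ℕ → R, ∀ k, x k = 1 - w ^ k := ⟨fun k => 1 - w ^ k, fun _ => rfl⟩
  have cwa : Commute w a := by rw [hwdef]; exact (Commute.one_left a).sub_left (Commute.refl a)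
  have hwkE : ∀ k, w ^ k ∈ er.Epos := by
    intro k
    induction k with
    | zero => simpa using (one_epos (er := er))
    | succ n ih => rw [pow_succ]; exact mul_epos ih hwE ((Commute.refl w).pow_left n).eq
  have hstep : ∀ k, x (k + 1) - x k = w ^ k * a := by
    intro k
    rw [hx, hx, pow_succ, ha_w, mul_sub, mul_one]
    abel
  have hwk1 : ∀ k, 1 - w ^ k ∈ er.Epos := by
    intro k
    induction k with
    | zero => simpa using (zero_epos (er := er))
    | succ n ih =>
        have e : 1 - w ^ (n + 1) = (1 - w ^ n) + w ^ n * a := by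
          rw [pow_succ, ha_w, mul_sub, mul_one]; abel
        rw [e]
        exact add_epos ih (mul_epos (hwkE n) haE (cwa.pow_left n).eq)
  have hxG : ∀ k, x k ∈ er.G := fun k => by
    rw [hx]; exact G_sub G_one (epos_G (hwkE k))
  have hmono : ∀ k, er.le (x k) (x (k + 1)) := by
    intro k
    show x (k + 1) - x k ∈ er.Epos
    rw [hstep k]
    exact mul_epos (hwkE k) haE (cwa.pow_left k).eq
  have hcomm : ∀ m n, x m * x n = x n * x m := by
    intro m n
    rw [hx, hx]
    have c' : Commute (1 - w ^ m) (w ^ n) :=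
      (Commute.one_left _).sub_left ((Commute.refl w).pow_pow m n)
    exact ((Commute.one_right _).sub_right c' : Commute (1 - w ^ m) (1 - w ^ n)).eq
  have hcz : ∀ z ∈ er.G, Commute z a → ∀ k, Commute z (x k) := by
    intro z hz hza k
    have czw : Commute z w := by
      rw [hwdef]; exact (Commute.one_right z).sub_right hza
    rw [hx]
    exact (Commute.one_right z).sub_right (czw.pow_right k)
  obtain ⟨p, ⟨hpG, hub, hlub⟩, hpCC⟩ := hCV x hxG hmono hcomm
    ⟨1, G_one, fun n => by
      show (1:R) - x n ∈ er.Epos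
      have e : (1:R) - x n = w ^ n := by rw [hx]; abel
      rw [e]; exact hwkE n⟩
  have hub' : ∀ k, p - x k ∈ er.Epos := fun k => hub (x k) ⟨k, rfl⟩
  have hpz : ∀ z ∈ er.G, Commute z a → p * z = z * p := fun z hz hza =>
    hpCC.2 z ⟨hz, fun a' ha' => by obtain ⟨k, rfl⟩ := ha'; exact (hcz z hz hza k).eq⟩
  have cpa : Commute p a := hpz a haG (Commute.refl a)
  have cpw : Commute p w := by
    rw [hwdef]; exact (Commute.one_right p).sub_right cpa
  have cpx : ∀ k, Commute p (x k) := hcz p hpG cpa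
  have hp1 : 1 - p ∈ er.Epos :=
    hlub 1 G_one (fun a' ha' => by
      obtain ⟨k, rfl⟩ := ha'
      show (1:R) - x k ∈ er.Epos
      have e : (1:R) - x k = w ^ k := by rw [hx]; abel
      rw [e]; exact hwkE k)
  have hx1 : x 1 = a := by rw [hx, pow_one, hwdef]; abel
  have hpE : p ∈ er.Epos := by
    have e : p = (p - x 1) + x 1 := by abel
    rw [e, hx1]
    exact add_epos (by rw [← hx1]; exact hub' 1) haE
  obtain ⟨q, hqdef⟩ : ∃ q : R, q = 1 - p := ⟨_, rfl⟩
  have hqE : q ∈ er.Epos := by rw [hqdef]; exact hp1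
  have hqG : q ∈ er.G := by rw [hqdef]; exact G_sub G_one hpG
  have cqa : Commute q a := by rw [hqdef]; exact (Commute.one_left a).sub_left cpa
  have cqw : Commute q w := by rw [hqdef]; exact (Commute.one_left w).sub_left cpw
  have hqwk : ∀ k, w ^ k - q ∈ er.Epos := by
    intro k
    have e : w ^ k - q = p - x k := by rw [hqdef, hx]; abel
    rw [e]; exact hub' k
  have hqa0 : q * a = 0 := by
    have hqaE : q * a ∈ er.Epos := mul_epos hqE haE cqa.eq
    have h2 : ∀ k, (p - q * a) - x k ∈ er.Epos := by
      intro k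
      have e2 : (x (k + 1) - x k) - q * a = (w ^ k - q) * a := by
        rw [hstep k, sub_mul]
      have e : (p - q * a) - x k = (p - x (k + 1)) + ((x (k + 1) - x k) - q * a) := by
        abel
      rw [e, e2]
      exact add_epos (hub' (k + 1))
        (mul_epos (hqwk k) haE ((cwa.pow_left k).sub_left cqa).eq)
    have h3 : er.le p (p - q * a) :=
      hlub _ (G_sub hpG (comm_mul_G hu huu hQA hqG haG cqa.eq))
        (fun a' ha' => by obtain ⟨k, rfl⟩ := ha'; exact h2 k)
    have h4 : -(q * a) ∈ er.Epos := by
      have e : (p - q * a) - p = -(q * a) := by abel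
      rw [← e]; exact h3
    exact epos_eq_zero hqaE h4
  have hpa : p * a = a := by
    have h' : a - p * a = 0 := by
      rw [hqdef, sub_mul, one_mul] at hqa0; exact hqa0
    exact (sub_eq_zero.mp h').symm
  have hap : a * p = a := by rw [← cpa.eq]; exact hpa
  have hqw : q * w = q := by
    rw [hwdef, mul_sub, mul_one, hqa0, sub_zero]
  have hqwk' : ∀ k, q * w ^ k = q := by
    intro k
    induction k with
    | zero => rw [pow_zero, mul_one]
    | succ n ih => rw [pow_succ, ← mul_assoc, ih, hqw]
  have hxq : ∀ k, x k * q = 0 := by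
    intro k
    rw [hx, sub_mul, one_mul, ← (cqw.pow_right k).eq, hqwk', sub_self]
  have hxp : ∀ k, x k * p = x k := by
    intro k
    have hqp1 : q + p = 1 := by rw [hqdef]; abel
    calc x k * p = x k * q + x k * p - x k * q := by abel
    _ = x k * (q + p) - x k * q := by rw [mul_add]
    _ = x k - x k * q := by rw [hqp1, mul_one]
    _ = x k := by rw [hxq, sub_zero]
  have hp2 : p = p ^ 2 := by
    have cqp : Commute p q := by
      rw [hqdef]; exact (Commute.one_right p).sub_right (Commute.refl p)
    have hppE : p - p * p ∈ er.Epos := by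
      have e : p - p * p = p * q := by rw [hqdef, mul_sub, mul_one]
      rw [e]; exact mul_epos hpE hqE cqp.eq
    have hxpp : ∀ k, p * p - x k ∈ er.Epos := by
      intro k
      have e : p * p - x k = (p - x k) * p + (x k * p - x k) := by noncomm_ring
      rw [e, hxp, sub_self, add_zero]
      exact mul_epos (hub' k) hpE ((Commute.refl p).sub_left (cpx k).symm).eq
    have h3 : er.le p (p * p) :=
      hlub _ (comm_mul_G hu huu hQA hpG hpG rfl)
        (fun a' ha' => by obtain ⟨k, rfl⟩ := ha'; exact hxpp k)
    have h4 : p - p * p = 0 :=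
      epos_eq_zero hppE (by rw [neg_sub]; exact h3)
    have := sub_eq_zero.mp h4
    rw [pow_two]; exact this
  have hppn : p * p = p := by rw [← pow_two, ← hp2]
  refine ⟨p, ⟨hpG, hp2⟩, ?_⟩
  intro h hh
  constructor
  · intro ha0
    have hha : h * a = 0 := mul_eq_zero_symm hQA haG hh ha0
    have cha : Commute h a := by show h * a = a * h; rw [hha, ha0]
    have hwh : w * h = h := by rw [hwdef, sub_mul, one_mul, ha0, sub_zero]
    have hhw : h * w = h := by rw [hwdef, mul_sub, mul_one, hha, sub_zero]
    have hwkh : ∀ k, w ^ k * h = h := by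
      intro k
      induction k with
      | zero => rw [pow_zero, one_mul]
      | succ n ih => rw [pow_succ, mul_assoc, hwh, ih]
    have hhwk : ∀ k, h * w ^ k = h := by
      intro k
      induction k with
      | zero => rw [pow_zero, mul_one]
      | succ n ih => rw [pow_succ, ← mul_assoc, ih, hhw]
    have hxh : ∀ k, x k * h = 0 := by
      intro k; rw [hx, sub_mul, one_mul, hwkh, sub_self]
    have hhx : ∀ k, h * x k = 0 := by
      intro k; rw [hx, mul_sub, mul_one, hhwk, sub_self]
    have hph : p * h = h * p :=
      hpCC.2 h ⟨hh, fun a' ha' => by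
        obtain ⟨k, rfl⟩ := ha'
        show h * x k = x k * h
        rw [hhx, hxh]⟩
    obtain ⟨e, hedef⟩ : ∃ e : R, e = p * h := ⟨_, rfl⟩
    have heG : e ∈ er.G := by rw [hedef]; exact comm_mul_G hu huu hQA hpG hh hph
    have he2 : ∀ k, e * e = (p - x k) * (h * h) := by
      intro k
      have c1 : e * e = (p * p) * (h * h) := by
        rw [hedef]
        calc (p * h) * (p * h) = p * (h * p) * h := by noncomm_ring
        _ = p * (p * h) * h := by rw [← hph]
        _ = (p * p) * (h * h) := by noncomm_ring
      have c2 : (p - x k) * (h * h) = p * (h * h) - x k * (h * h) := by rw [sub_mul]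
      have c3 : x k * (h * h) = 0 := by rw [← mul_assoc, hxh, zero_mul]
      rw [c1, hppn, c2, c3, sub_zero]
    obtain ⟨N, hN⟩ := exists_nat_bound (sq_epos hh)
    have hNle : N ≤ 2 ^ N := Nat.le_of_lt (Nat.lt_two_pow_self (n := N))
    have hscalar : (2:R) ^ N - h * h ∈ er.Epos := by
      have ec : (2:R) ^ N - h * h = ((2 ^ N - N : ℕ) : R) + ((N:R) - h ^ 2) := by
        rw [pow_two]
        push_cast [Nat.cast_sub hNle]
        abel
      rw [ec]
      exact add_epos (nat_epos _) hN
    have cph : Commute p h := hph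
    have hup : ∀ k, (p - u ^ N * (e * e)) - x k ∈ er.Epos := by
      intro k
      have step1 : (2:R) ^ N * (p - x k) - e * e ∈ er.Epos := by
        have ecen : (2:R) ^ N * (p - x k) = (p - x k) * (2:R) ^ N :=
          ((central_two _).pow_left N).eq
        rw [he2 k, ecen, ← mul_sub]
        have cxh2 : Commute (x k) h := (hcz h hh cha k).symm
        have chh : Commute (p - x k) (h * h) :=
          (cph.mul_right cph).sub_left (cxh2.mul_right cxh2)
        have c2N : Commute (p - x k) ((2:R) ^ N) :=
          ((central_two p).symm.pow_right N).sub_left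
            ((central_two (x k)).symm.pow_right N)
        exact mul_epos (hub' k) hscalar (c2N.sub_right chh).eq
      have step2 : (p - x k) - u ^ N * (e * e)
          = u ^ N * ((2:R) ^ N * (p - x k) - e * e) := by
        rw [mul_sub, ← mul_assoc (u ^ N) ((2:R) ^ N) (p - x k),
          upow_cancel' hu huu N, one_mul]
      have e3 : (p - u ^ N * (e * e)) - x k = (p - x k) - u ^ N * (e * e) := by abel
      rw [e3, step2]
      exact upow_mul_epos hu huu N hQA step1
    have heeG : e * e ∈ er.G := by rw [← pow_two]; exact epos_G (sq_epos heG)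
    have heeE : e * e ∈ er.Epos := by rw [← pow_two]; exact sq_epos heG
    have h3 : er.le p (p - u ^ N * (e * e)) :=
      hlub _ (G_sub hpG (upow_mul_G hu huu N hQA heeG))
        (fun a' ha' => by obtain ⟨k, rfl⟩ := ha'; exact hup k)
    have h4 : -(u ^ N * (e * e)) ∈ er.Epos := by
      have e4 : (p - u ^ N * (e * e)) - p = -(u ^ N * (e * e)) := by abel
      rw [← e4]; exact h3
    have h5 : u ^ N * (e * e) = 0 :=
      epos_eq_zero (upow_mul_epos hu huu N hQA heeE) h4
    have hee0 : e * e = 0 := by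
      have e5 : e * e = (2:R) ^ N * (u ^ N * (e * e)) := by
        rw [← mul_assoc ((2:R) ^ N) (u ^ N) (e * e), upow_cancel hu huu N, one_mul]
      rw [e5, h5, mul_zero]
    have he0 : e = 0 := sq_eq_zero hQA heG (by rw [pow_two]; exact hee0)
    rw [hedef] at he0
    exact he0
  · intro hp0
    rw [← hap, mul_assoc, hp0, mul_zero]

lemma carrier_exists (hQA : er.HasQA) (hCV : er.HasCV) {a : R} (haE : a ∈ er.Epos) :
    ∃ p, er.IsCarrier a p := by
  obtain ⟨k, hbE, hb1, hba⟩ := scale01 hu huu hQA haE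
  obtain ⟨p, hpP, hann⟩ := carrier01 hu huu hQA hCV hbE hb1
  refine ⟨p, hpP, fun h hh => ?_⟩
  rw [← hann h hh]
  constructor
  · intro h0; rw [mul_assoc, h0, mul_zero]
  · intro h0
    rw [hba, mul_assoc, h0, mul_zero]

end Half

end ERing
namespace ERing

variable {R : Type*} [Ring R] {er : ERing R}
set_option linter.unusedSectionVars false

lemma key_lemma {u : R} (hu : u ∈ er.E) (huu : u + u = 1) (hQA : er.HasQA)
    (hCV : er.HasCV) {g a p : R} (hg : g ∈ er.G) (ha : er.IsPosPart g a)
    (hp : er.IsCarrier a p) :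
    p ∈ er.P ∧ p ∈ er.CC {g} ∧ er.le ((1 - p) * g) 0 ∧ er.le 0 (p * g) := by
  obtain ⟨haG, m, hmabs, haa⟩ := ha
  obtain ⟨hmE, hgm, hmcc⟩ := abs_spec hu huu hQA hCV hg hmabs
  have hmG : m ∈ er.G := hmabs.1
  have hm2 : m ^ 2 = g ^ 2 := hmabs.2.2
  obtain ⟨hv1E, hv2E⟩ := posneg hu huu hQA hCV hg hmE hm2 hgm
  have ha_eq : a = u * (m + g) := by
    apply half_unique hu huu hQA haG (half_mul_G hu huu hQA (G_add hmG hg))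
    rw [haa, two_half hu huu]
  obtain ⟨b, hbdef⟩ : ∃ b : R, b = u * (m - g) := ⟨_, rfl⟩
  have hbE : b ∈ er.Epos := by rw [hbdef]; exact half_mul_epos hu huu hQA hv2E
  have hbG : b ∈ er.G := epos_G hbE
  have haE : a ∈ er.Epos := by rw [ha_eq]; exact half_mul_epos hu huu hQA hv1E
  have h12 : (m + g) * (m - g) = 0 := by
    have e : (m + g) * (m - g) = (m ^ 2 - g ^ 2) + (g * m - m * g) := by noncomm_ring
    rw [e, hm2, hgm]; abel
  have hab : a * b = 0 := by
    rw [ha_eq, hbdef]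
    have c1 : (m + g) * u = u * (m + g) := (half_comm hu huu hQA (G_add hmG hg)).symm
    calc u * (m + g) * (u * (m - g)) = u * ((m + g) * u) * (m - g) := by noncomm_ring
    _ = u * (u * (m + g)) * (m - g) := by rw [c1]
    _ = (u * u) * ((m + g) * (m - g)) := by noncomm_ring
    _ = 0 := by rw [h12, mul_zero]
  have hg_ab : a - b = g := by
    rw [ha_eq, hbdef, ← mul_sub]
    have e : (m + g) - (m - g) = g + g := by abel
    rw [e, half_double hu huu]
  obtain ⟨hap, hpa, hdc⟩ := carrier_props hQA haG hp
  have hpP : p ∈ er.P := hp.1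
  have hpG : p ∈ er.G := hpP.1
  have hpb : p * b = 0 := (hp.2 b hbG).mp hab
  have hpg : p * g = a := by
    rw [← hg_ab, mul_sub, hpa, hpb, sub_zero]
  refine ⟨hpP, ⟨hpG, ?_⟩, ?_, ?_⟩
  · intro z hz
    obtain ⟨hzG, hzc⟩ := hz
    have hzg : z * g = g * z := hzc g rfl
    have hzm : z * m = m * z := hmcc z hzG hzg
    have hza : z * a = a * z := by
      rw [ha_eq]
      have czu : Commute z u := (half_comm hu huu hQA hzG).symm
      exact (czu.mul_right ((show Commute z m from hzm).add_right hzg)).eq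
    exact (hdc z hzG hza).symm
  · show (0:R) - (1 - p) * g ∈ er.Epos
    have e : (0:R) - (1 - p) * g = b := by
      rw [sub_mul, one_mul, hpg, ← hg_ab]; abel
    rw [e]; exact hbE
  · show p * g - 0 ∈ er.Epos
    rw [sub_zero, hpg]; exact haE

end ERing

/-- In an AH-algebra, `p := (g⁺)°` satisfies `p ∈ P ∩ CC(g)` and
`(1−p)g ≤ 0 ≤ pg`; in particular `G` has the comparability property. -/
theorem stmt9 {R : Type*} [Ring R] (er : ERing R) (hAH : er.IsAH)
    (g a p : R) (hg : g ∈ er.G)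
    (ha : er.IsPosPart g a) (hp : er.IsCarrier a p) :
    (p ∈ er.P ∧ p ∈ er.CC {g} ∧ er.le ((1 - p) * g) 0 ∧ er.le 0 (p * g)) ∧
    ∀ g' ∈ er.G, ∃ q, q ∈ er.P ∧ q ∈ er.commutant {g'} ∧
      q ∈ er.commutant (er.P ∩ er.commutant {g'}) ∧
      er.le ((1 - q) * g') 0 ∧ er.le 0 (q * g') := by
  obtain ⟨⟨u, hu, huu⟩, hQA, hCV⟩ := hAH
  refine ⟨ERing.key_lemma hu huu hQA hCV hg ha hp, ?_⟩
  intro g' hg'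
  obtain ⟨m, hmG, hmE, hm2, hmC⟩ := ERing.sqrt_ex hu huu hQA hCV (ERing.sq_epos hg')
  have hmabs : er.IsAbs g' m :=
    ⟨hmG, by show m - 0 ∈ er.Epos; rwa [sub_zero], hm2⟩
  have hgm : g' * m = m * g' := hmC g' hg' ((Commute.refl g').pow_right 2).eq
  obtain ⟨hv1E, _⟩ := ERing.posneg hu huu hQA hCV hg' hmE hm2 hgm
  have haG : u * (m + g') ∈ er.G := ERing.half_mul_G hu huu hQA (ERing.G_add hmG hg')
  have hpp : er.IsPosPart g' (u * (m + g')) := ⟨haG, m, hmabs, ERing.two_half hu huu _⟩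
  have haE : u * (m + g') ∈ er.Epos := ERing.half_mul_epos hu huu hQA hv1E
  obtain ⟨q, hq⟩ := ERing.carrier_exists hu huu hQA hCV haE
  obtain ⟨hqP, hqCC, hle1, hle2⟩ := ERing.key_lemma hu huu hQA hCV hg' hpp hq
  have hqG : q ∈ er.G := hqP.1
  have hgmem : g' ∈ er.commutant {g'} :=
    ⟨hg', fun y hy => by rw [Set.mem_singleton_iff] at hy; rw [hy]⟩
  refine ⟨q, hqP, ⟨hqG, fun y hy => ?_⟩, ⟨hqG, fun z hz => hqCC.2 z hz.2⟩, hle1, hle2⟩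
  rw [Set.mem_singleton_iff] at hy
  rw [hy]
  exact hqCC.2 g' hgmem
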